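/- Let θ ≥ 0, T > 0, δ ∈ (0,T], and let r ↦ φ(r) = (1 - K(T-r))/(e^{θ(T-r)}(T-r)) for a constant K ≥ 0 with Kδ ≤ 1. If X_s = x * exp(-∫_{T-δ}^{s} φ(r) dr) for s ∈ [T-δ, T), then |X_s| ≤ C |x| (T-s)/δ for some constant C depending only on θ, K, δ, T; in particular X_s → 0 as s → T. -/

import Mathlib

open Real Filter

theorem stmt_6 (θ K T δ x : ℝ) (hθ : 0 ≤ θ) (hK : 0 ≤ K) (hδ : 0 < δ) (hδT : δ ≤ T)
    (hKδ : K * δ ≤ 1)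
    (X : ℝ → ℝ)
    (hX : ∀ s : ℝ, X s = x * Real.exp (-∫ r in (T - δ)..s,
        (1 - K * (T - r)) / (Real.exp (θ * (T - r)) * (T - r)))) :
    ∃ C > 0, (∀ s : ℝ, T - δ ≤ s → s < T → |X s| ≤ C * |x| * (T - s) / δ) ∧
      Tendsto X (nhdsWithin T (Set.Iio T)) (nhds 0) := by
  have key : ∀ s : ℝ, T - δ ≤ s → s < T →
      |X s| ≤ Real.exp ((θ + K) * δ) * |x| * (T - s) / δ := by
    intro s hs1 hs2
    have hTs : 0 < T - s := by linarith
    have huIcc : Set.uIcc (T - δ) s = Set.Icc (T - δ) s := Set.uIcc_of_le hs1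
    have hpos : ∀ r ∈ Set.Icc (T - δ) s, 0 < T - r := by
      intro r hr; have := hr.2; linarith
    -- integrability of φ
    have hcontφ : ContinuousOn
        (fun r => (1 - K * (T - r)) / (Real.exp (θ * (T - r)) * (T - r)))
        (Set.Icc (T - δ) s) := by
      apply ContinuousOn.div
      · fun_prop
      · fun_prop
      · intro r hr
        have h1 := hpos r hr
        have h2 := Real.exp_pos (θ * (T - r))
        positivity
    have hintφ : IntervalIntegrable
        (fun r => (1 - K * (T - r)) / (Real.exp (θ * (T - r)) * (T - r)))
        MeasureTheory.volume (T - δ) s := by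
      apply ContinuousOn.intervalIntegrable
      rw [huIcc]; exact hcontφ
    -- integrability of lower bound
    have hcontg : ContinuousOn (fun r => 1 / (T - r) - (θ + K)) (Set.Icc (T - δ) s) := by
      apply ContinuousOn.sub _ continuousOn_const
      apply ContinuousOn.div continuousOn_const (by fun_prop)
      intro r hr; exact (hpos r hr).ne'
    have hintg : IntervalIntegrable (fun r => 1 / (T - r) - (θ + K))
        MeasureTheory.volume (T - δ) s := by
      apply ContinuousOn.intervalIntegrable
      rw [huIcc]; exact hcontg
    have hint1 : IntervalIntegrable (fun r => 1 / (T - r))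
        MeasureTheory.volume (T - δ) s := by
      apply ContinuousOn.intervalIntegrable
      rw [huIcc]
      apply ContinuousOn.div continuousOn_const (by fun_prop)
      intro r hr; exact (hpos r hr).ne'
    -- pointwise inequality
    have hle : ∀ r ∈ Set.Icc (T - δ) s,
        (fun r => 1 / (T - r) - (θ + K)) r ≤
        (fun r => (1 - K * (T - r)) / (Real.exp (θ * (T - r)) * (T - r))) r := by
      intro r hr
      have hu : 0 < T - r := hpos r hr
      have main : ∀ u : ℝ, 0 < u →
          1 / u - (θ + K) ≤ (1 - K * u) / (Real.exp (θ * u) * u) := by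
        intro u hu
        have hexp : 0 < Real.exp (θ * u) := Real.exp_pos _
        rw [le_div_iff₀ (by positivity)]
        have h1 : Real.exp (θ * u) * (1 - θ * u) ≤ 1 := by
          have := Real.add_one_le_exp (-(θ * u))
          have h2 : Real.exp (θ * u) * Real.exp (-(θ * u)) = 1 := by
            rw [← Real.exp_add]; simp
          nlinarith [Real.exp_pos (θ * u)]
        have h2 : K * u ≤ K * u * Real.exp (θ * u) := by
          have h3 : 1 ≤ Real.exp (θ * u) := Real.one_le_exp (by positivity)
          nlinarith [mul_nonneg hK hu.le]
        have heq : (1 / u - (θ + K)) * (Real.exp (θ * u) * u) =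
            Real.exp (θ * u) - (θ + K) * u * Real.exp (θ * u) := by
          field_simp
        rw [heq]
        nlinarith
      exact main (T - r) hu
    -- integral of 1/(T-r)
    have hlog : (∫ r in (T - δ)..s, 1 / (T - r)) = Real.log δ - Real.log (T - s) := by
      have hderiv : ∀ r ∈ Set.uIcc (T - δ) s,
          HasDerivAt (fun r => -Real.log (T - r)) (1 / (T - r)) r := by
        intro r hr
        rw [huIcc] at hr
        have hu : 0 < T - r := hpos r hr
        have h1 : HasDerivAt (fun r : ℝ => T - r) (-1) r := by
          simpa using (hasDerivAt_id r).const_sub T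
        have h2 := (h1.log hu.ne').neg
        rw [show (1:ℝ) / (T - r) = -(-1 / (T - r)) by ring]
        exact h2
      rw [intervalIntegral.integral_eq_sub_of_hasDerivAt hderiv hint1]
      have hTT : T - (T - δ) = δ := by ring
      rw [hTT]; ring
    -- lower bound on the integral
    have hmono := intervalIntegral.integral_mono_on hs1 hintg hintφ hle
    have hsplit : (∫ r in (T - δ)..s, (1 / (T - r) - (θ + K))) =
        (Real.log δ - Real.log (T - s)) - (θ + K) * (s - (T - δ)) := by
      rw [intervalIntegral.integral_sub hint1 intervalIntegrable_const, hlog,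
        intervalIntegral.integral_const]
      simp only [smul_eq_mul]
      ring
    rw [hsplit] at hmono
    have hsdelta : (θ + K) * (s - (T - δ)) ≤ (θ + K) * δ := by
      apply mul_le_mul_of_nonneg_left _ (by positivity)
      linarith
    have hIlb : Real.log δ - Real.log (T - s) - (θ + K) * δ ≤
        ∫ r in (T - δ)..s, (1 - K * (T - r)) / (Real.exp (θ * (T - r)) * (T - r)) := by
      linarith
    have hexp_le : Real.exp (-∫ r in (T - δ)..s,
        (1 - K * (T - r)) / (Real.exp (θ * (T - r)) * (T - r))) ≤
        Real.exp ((θ + K) * δ) * (T - s) / δ := by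
      have : Real.exp (-∫ r in (T - δ)..s,
          (1 - K * (T - r)) / (Real.exp (θ * (T - r)) * (T - r))) ≤
          Real.exp (Real.log (T - s) - Real.log δ + (θ + K) * δ) := by
        apply Real.exp_le_exp.mpr
        linarith
      refine this.trans_eq ?_
      rw [Real.exp_add, Real.exp_sub, Real.exp_log hTs, Real.exp_log hδ]
      ring
    rw [hX s, abs_mul, abs_of_pos (Real.exp_pos _)]
    calc |x| * Real.exp (-∫ r in (T - δ)..s,
          (1 - K * (T - r)) / (Real.exp (θ * (T - r)) * (T - r)))
        ≤ |x| * (Real.exp ((θ + K) * δ) * (T - s) / δ) :=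
          mul_le_mul_of_nonneg_left hexp_le (abs_nonneg x)
      _ = Real.exp ((θ + K) * δ) * |x| * (T - s) / δ := by ring
  refine ⟨Real.exp ((θ + K) * δ), Real.exp_pos _, key, ?_⟩
  have hbound : ∀ᶠ s in nhdsWithin T (Set.Iio T),
      ‖X s‖ ≤ Real.exp ((θ + K) * δ) * |x| * (T - s) / δ := by
    have h1 : ∀ᶠ s in nhdsWithin T (Set.Iio T), T - δ < s :=
      eventually_nhdsWithin_of_eventually_nhds (eventually_gt_nhds (by linarith))
    filter_upwards [h1, self_mem_nhdsWithin] with s hs1 hs2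
    exact key s hs1.le hs2
  apply squeeze_zero_norm' hbound
  have hcont : Continuous fun s : ℝ => Real.exp ((θ + K) * δ) * |x| * (T - s) / δ := by
    fun_prop
  have h0 := hcont.tendsto T
  have h0' : Tendsto (fun s : ℝ => Real.exp ((θ + K) * δ) * |x| * (T - s) / δ)
      (nhds T) (nhds 0) := by simpa using h0
  exact h0'.mono_left nhdsWithin_le_nhds
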